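/- Let n be a positive integer, C ⊆ ℝⁿ a convex set, φ : ℝⁿ → ℝ a convex function, x₀ ∈ C, σ₁ ≥ 0, and σ₂ > 0. Suppose x⁺ ∈ C minimizes the function x ↦ φ(x) + σ₁‖x − x₀‖₁ + (σ₂/2)‖x − x₀‖² over C, where ‖·‖ is the Euclidean norm and ‖d‖₁ := Σᵢ|dᵢ|. Then φ(x₀) ≥ φ(x⁺) + σ₁‖x⁺ − x₀‖₁ + σ₂‖x⁺ − x₀‖². -/

import Mathlib

/-- Double-proximal descent inequality. If `x⁺ ∈ C` minimizes
`x ↦ φ(x) + σ₁‖x − x₀‖₁ + (σ₂/2)‖x − x₀‖²` over a convex set `C ∋ x₀`, with `φ` convex,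
`σ₁ ≥ 0`, `σ₂ > 0`, then `φ(x₀) ≥ φ(x⁺) + σ₁‖x⁺ − x₀‖₁ + σ₂‖x⁺ − x₀‖²`. -/
theorem double_proximal_descent (n : ℕ) (hn : 0 < n)
    (C : Set (EuclideanSpace ℝ (Fin n))) (hC : Convex ℝ C)
    (φ : EuclideanSpace ℝ (Fin n) → ℝ)
    (hφ : ConvexOn ℝ (Set.univ : Set (EuclideanSpace ℝ (Fin n))) φ)
    (x₀ : EuclideanSpace ℝ (Fin n)) (hx₀ : x₀ ∈ C)
    (σ₁ σ₂ : ℝ) (hσ₁ : 0 ≤ σ₁) (hσ₂ : 0 < σ₂)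
    (xp : EuclideanSpace ℝ (Fin n)) (hxp : xp ∈ C)
    (hmin : ∀ x ∈ C,
      φ xp + σ₁ * (∑ i, |xp i - x₀ i|) + σ₂ / 2 * ‖xp - x₀‖ ^ 2
        ≤ φ x + σ₁ * (∑ i, |x i - x₀ i|) + σ₂ / 2 * ‖x - x₀‖ ^ 2) :
    φ x₀ ≥ φ xp + σ₁ * (∑ i, |xp i - x₀ i|) + σ₂ * ‖xp - x₀‖ ^ 2 := by
  set L : ℝ := ∑ i, |xp i - x₀ i| with hL
  set Q : ℝ := ‖xp - x₀‖ ^ 2 with hQ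
  have hQ0 : 0 ≤ Q := sq_nonneg _
  -- key inequality for each t ∈ (0,1)
  have key : ∀ t ∈ Set.Ioo (0:ℝ) 1,
      φ xp + σ₁ * L + σ₂ / 2 * (1 + t) * Q ≤ φ x₀ := by
    intro t ht
    obtain ⟨ht0, ht1⟩ := ht
    set xt : EuclideanSpace ℝ (Fin n) := (1 - t) • x₀ + t • xp with hxt
    have hmem : xt ∈ C := hC hx₀ hxp (by linarith) ht0.le (by ring)
    have hφt : φ xt ≤ (1 - t) * φ x₀ + t * φ xp := by
      have := hφ.2 (Set.mem_univ x₀) (Set.mem_univ xp)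
        (by linarith : (0:ℝ) ≤ 1 - t) ht0.le (by ring)
      simpa [smul_eq_mul] using this
    have hdiff : xt - x₀ = t • (xp - x₀) := by
      rw [hxt]; module
    have hsum : (∑ i, |xt i - x₀ i|) = t * L := by
      rw [hL, Finset.mul_sum]
      refine Finset.sum_congr rfl fun i _ => ?_
      have : xt i - x₀ i = t * (xp i - x₀ i) := by
        have := congrArg (fun v : EuclideanSpace ℝ (Fin n) => v i) hdiff
        simpa [PiLp.sub_apply, PiLp.smul_apply, smul_eq_mul] using this
      rw [this, abs_mul, abs_of_pos ht0]
    have hnorm : ‖xt - x₀‖ ^ 2 = t ^ 2 * Q := by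
      rw [hdiff, norm_smul, mul_pow, hQ]
      simp [abs_of_pos ht0]
    have h1 := hmin xt hmem
    rw [hsum, hnorm] at h1
    nlinarith [mul_pos ht0 hσ₂, sq_nonneg (1 - t)]
  -- take limit t → 1⁻
  have hlim : Filter.Tendsto (fun t : ℝ => φ xp + σ₁ * L + σ₂ / 2 * (1 + t) * Q)
      (nhdsWithin 1 (Set.Ioo (0:ℝ) 1)) (nhds (φ xp + σ₁ * L + σ₂ * Q)) := by
    have : Filter.Tendsto (fun t : ℝ => φ xp + σ₁ * L + σ₂ / 2 * (1 + t) * Q)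
        (nhds 1) (nhds (φ xp + σ₁ * L + σ₂ / 2 * (1 + 1) * Q)) :=
      Continuous.tendsto (by continuity) 1
    have h2 : σ₂ / 2 * (1 + 1) * Q = σ₂ * Q := by ring
    rw [h2] at this
    exact this.mono_left nhdsWithin_le_nhds
  have hne : (nhdsWithin (1:ℝ) (Set.Ioo 0 1)).NeBot := by
    apply mem_closure_iff_nhdsWithin_neBot.mp
    rw [closure_Ioo (by norm_num : (0:ℝ) ≠ 1)]
    exact ⟨by norm_num, le_refl 1⟩
  exact le_of_tendsto hlim (Filter.eventually_of_mem self_mem_nhdsWithin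
    fun t ht => key t ht)
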